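/- Define K : 𝒟₁(ℝ) → ℝ by K(ν) := 1 if ν([0, ∞)) = 1, and K(ν) := 0 otherwise. Then: (a) K is indifferent to mixtures; and (b) K is not an expected utility, i.e. there is no Borel measurable f : ℝ → ℝ that is integrable with respect to every ν ∈ 𝒟₁(ℝ) and satisfies K(ν) = ∫ f dν for all ν ∈ 𝒟₁(ℝ). -/

import Mathlib

open MeasureTheory ProbabilityTheory ENNReal

noncomputable section

/-- Finite first moment for a measure on ℝ. -/
def FiniteFirstMomentR (ν : Measure ℝ) : Prop :=
  Integrable (fun x : ℝ => |x|) ν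

/-- `K` is indifferent to mixtures (measures on ℝ). -/
def IndiffMixturesR (K : Measure ℝ → ℝ) : Prop :=
  ∀ (I : Type) [MeasurableSpace I], ∀ lam : Measure I, IsProbabilityMeasure lam →
    ∀ η η' : Kernel I ℝ, IsMarkovKernel η → IsMarkovKernel η' →
      (∀ i, FiniteFirstMomentR (η i)) → (∀ i, FiniteFirstMomentR (η' i)) →
      FiniteFirstMomentR (lam.bind (fun i => η i)) →
      FiniteFirstMomentR (lam.bind (fun i => η' i)) →
      (∀ i, K (η' i) ≤ K (η i)) →
      K (lam.bind (fun i => η' i)) ≤ K (lam.bind (fun i => η i))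

/-- The functional "`1` if the distribution is supported on `[0, ∞)`, else `0`". -/
def Kpos (ν : Measure ℝ) : ℝ :=
  if ν (Set.Ici (0 : ℝ)) = 1 then 1 else 0

lemma Kpos_nonneg (ν : Measure ℝ) : 0 ≤ Kpos ν := by
  unfold Kpos; split_ifs <;> norm_num

lemma Kpos_le_one (ν : Measure ℝ) : Kpos ν ≤ 1 := by
  unfold Kpos; split_ifs <;> norm_num

lemma integrable_dirac' {f : ℝ → ℝ} (hf : Measurable f) (x : ℝ) :
    Integrable f (Measure.dirac x) :=
  ⟨hf.aestronglyMeasurable, by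
    rw [HasFiniteIntegral, lintegral_dirac' x hf.enorm]; exact ENNReal.coe_lt_top⟩

lemma Kpos_eq_one_iff (ν : Measure ℝ) : Kpos ν = 1 ↔ ν (Set.Ici (0 : ℝ)) = 1 := by
  unfold Kpos; split_ifs with h <;> simp [h]

/-- `Kpos` is indifferent to mixtures but is not an expected utility. -/
theorem Kpos_indiffMixtures_not_expectedUtility :
    IndiffMixturesR Kpos ∧
    ¬ ∃ f : ℝ → ℝ, Measurable f ∧
        (∀ ν : Measure ℝ, IsProbabilityMeasure ν → FiniteFirstMomentR ν →
          Integrable f ν) ∧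
        (∀ ν : Measure ℝ, IsProbabilityMeasure ν → FiniteFirstMomentR ν →
          Kpos ν = ∫ x, f x ∂ν) := by
  constructor
  · intro I _ lam hlam η η' hη hη' _ _ _ _ hle
    by_cases h' : Kpos (lam.bind (fun i => η' i)) = 1
    swap
    · have h0 : Kpos (lam.bind (fun i => η' i)) = 0 := by
        unfold Kpos at h' ⊢; split_ifs at h' ⊢ <;> simp_all
      rw [h0]; exact Kpos_nonneg _
    · have ms : MeasurableSet (Set.Ici (0 : ℝ)) := measurableSet_Ici
      rw [Kpos_eq_one_iff] at h'
      rw [Measure.bind_apply ms (η'.measurable.aemeasurable)] at h'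
      -- a.e. i, η' i (Ici 0) = 1
      have hae : (fun i => (η' i) (Set.Ici (0 : ℝ))) =ᵐ[lam] fun _ => (1 : ℝ≥0∞) := by
        apply ae_eq_of_ae_le_of_lintegral_le
        · exact Filter.Eventually.of_forall fun i => prob_le_one
        · rw [h']; exact one_ne_top
        · exact aemeasurable_const
        · rw [lintegral_one, measure_univ, h']
      have hae2 : (fun i => (η i) (Set.Ici (0 : ℝ))) =ᵐ[lam] fun _ => (1 : ℝ≥0∞) := by
        filter_upwards [hae] with i hi
        have h1' : Kpos (η' i) = 1 := (Kpos_eq_one_iff _).mpr hi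
        have h1 : Kpos (η i) = 1 := by
          have := hle i
          rw [h1'] at this
          unfold Kpos at this ⊢; split_ifs at this ⊢ <;> norm_num at this <;> rfl
        exact (Kpos_eq_one_iff _).mp h1
      have : Kpos (lam.bind (fun i => η i)) = 1 := by
        rw [Kpos_eq_one_iff, Measure.bind_apply ms (η.measurable.aemeasurable), lintegral_congr_ae hae2,
          lintegral_one, measure_univ]
      rw [this]; exact Kpos_le_one _
  · rintro ⟨f, hfm, hfi, hfK⟩
    -- values on Dirac measures
    have hdirac : ∀ x : ℝ, ∀ c : ℝ, Kpos (Measure.dirac x) = c → f x = c := by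
      intro x c hc
      have h1 : IsProbabilityMeasure (Measure.dirac x) := Measure.dirac.isProbabilityMeasure
      have h2 : FiniteFirstMomentR (Measure.dirac x) :=
        integrable_dirac' measurable_abs x
      have := hfK _ h1 h2
      rw [hc, integral_dirac' f x hfm.stronglyMeasurable] at this
      exact this.symm
    have hpos : f 1 = 1 := hdirac 1 1 (by rw [Kpos_eq_one_iff]; simp)
    have hneg : f (-1) = 0 := by
      refine hdirac (-1) 0 ?_
      unfold Kpos
      rw [if_neg]
      rw [Measure.dirac_apply' _ measurableSet_Ici]
      norm_num [Set.indicator_apply]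
    -- the mixture measure
    set ν : Measure ℝ := (1/2 : ℝ≥0∞) • Measure.dirac (-1) + (1/2 : ℝ≥0∞) • Measure.dirac 1
      with hν
    have hprob : IsProbabilityMeasure ν := by
      constructor
      rw [hν]
      simp [Measure.add_apply, Measure.smul_apply]
      rw [ENNReal.inv_two_add_inv_two]
    have hmom : FiniteFirstMomentR ν := by
      unfold FiniteFirstMomentR
      rw [hν]
      refine Integrable.add_measure ?_ ?_ <;>
        exact (integrable_dirac' measurable_abs _).smul_measure (by norm_num)
    have hK0 : Kpos ν = 0 := by
      unfold Kpos
      rw [if_neg]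
      rw [hν]
      simp only [Measure.add_apply, Measure.smul_apply, smul_eq_mul]
      rw [Measure.dirac_apply' _ measurableSet_Ici, Measure.dirac_apply' _ measurableSet_Ici]
      norm_num [Set.indicator_apply]
    have hint := hfK ν hprob hmom
    rw [hK0] at hint
    rw [hν] at hint
    rw [integral_add_measure ((hfi ν hprob hmom).mono_measure (by
          rw [hν]; exact Measure.le_add_right le_rfl))
        ((hfi ν hprob hmom).mono_measure (by
          rw [hν]; exact Measure.le_add_left le_rfl))] at hint
    rw [integral_smul_measure, integral_smul_measure,
      integral_dirac' f _ hfm.stronglyMeasurable, integral_dirac' f _ hfm.stronglyMeasurable,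
      hpos, hneg] at hint
    norm_num at hint
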